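/- For the TRIP-Stern sequence for (e,12,e), the level sums are given in closed form by S(n) = 2ⁿ + 2·3ⁿ for all n ≥ 0 (equivalently, S satisfies S(n) = 5·S(n−1) − 6·S(n−2)). -/

import Mathlib

/-- `f₀(a,b,c) = (c,b,a+c)` for the triplet `(e,12,e)`. -/
def f0 (p : ℤ × ℤ × ℤ) : ℤ × ℤ × ℤ := (p.2.2, p.2.1, p.1 + p.2.2)

/-- `f₁(a,b,c) = (a,b,a+c)` for the triplet `(e,12,e)`. -/
def f1 (p : ℤ × ℤ × ℤ) : ℤ × ℤ × ℤ := (p.1, p.2.1, p.1 + p.2.2)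

/-- One step of the TRIP-Stern tree: apply `f₁` on a `true` and `f₀` on a `false`. -/
def step (p : ℤ × ℤ × ℤ) (i : Bool) : ℤ × ℤ × ℤ := if i then f1 p else f0 p

/-- `Δ(v) = f_{iₙ}(⋯ f_{i₁}(1,1,1) ⋯)`, applying `f_{i₁}` first. -/
def delta (v : List Bool) : ℤ × ℤ × ℤ := v.foldl step (1, 1, 1)

/-- `S n` is the sum of all three coordinates of all `2ⁿ` level-`n` triples. -/
def S (n : ℕ) : ℤ :=
  ∑ v : Fin n → Bool,
    ((delta (List.ofFn v)).1 + (delta (List.ofFn v)).2.1 + (delta (List.ofFn v)).2.2)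


lemma key : ∀ (n : ℕ) (p : ℤ × ℤ × ℤ),
    (∑ v : Fin n → Bool,
      (((List.ofFn v).foldl step p).1 + ((List.ofFn v).foldl step p).2.1 +
        ((List.ofFn v).foldl step p).2.2))
    = 3 ^ n * (p.1 + p.2.2) + 2 ^ n * p.2.1 := by
  intro n
  induction n with
  | zero => intro p; simp; ring
  | succ n ih =>
    intro p
    rw [Fintype.sum_equiv (Fin.consEquiv (fun _ : Fin (n + 1) => Bool)).symm
      _ (fun q => (((List.ofFn q.2).foldl step (step p q.1)).1 +
        ((List.ofFn q.2).foldl step (step p q.1)).2.1 +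
        ((List.ofFn q.2).foldl step (step p q.1)).2.2))
      (by intro v; simp [List.ofFn_succ, Fin.consEquiv]; rfl)]
    rw [Fintype.sum_prod_type]
    simp only [ih]
    rw [Fintype.sum_bool]
    simp [step, f0, f1]
    ring

lemma S_closed (n : ℕ) : S n = 2 ^ n + 2 * 3 ^ n := by
  have h := key n (1, 1, 1)
  simp only [S, delta]
  rw [h]; ring

/-- For the TRIP-Stern sequence for `(e,12,e)`, the level sums are given by
`S(n) = 2ⁿ + 2·3ⁿ` for all `n ≥ 0`, and satisfy `S(n) = 5·S(n−1) − 6·S(n−2)`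
for all `n ≥ 2`. -/
theorem levelSum_closedForm_e12e :
    (∀ n : ℕ, S n = 2 ^ n + 2 * 3 ^ n) ∧
    (∀ n : ℕ, 2 ≤ n → S n = 5 * S (n - 1) - 6 * S (n - 2)) := by
  constructor
  · exact S_closed
  · intro n hn
    obtain ⟨m, rfl⟩ : ∃ m, n = m + 2 := ⟨n - 2, by omega⟩
    simp only [S_closed, Nat.add_sub_cancel, show m + 2 - 1 = m + 1 from rfl]
    ring
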